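/- Let C be a monoidal category generated by wide monoidal subcategories spure(C) and I(C), and suppose C is (spure, I)-crossed: for every composable pair Σ ∈ I(C), Γ ∈ spure(C) with Σ∘Γ defined, there exist Σ' ∈ I(C) and Γ' ∈ spure(C) with Σ∘Γ = Γ'∘Σ'. Then every morphism of C can be written in the form Γ∘Σ with Γ ∈ spure(C) and Σ ∈ I(C). -/

import Mathlib

open CategoryTheory MonoidalCategory

universe v u

variable {C : Type u} [Category.{v} C] [MonoidalCategory C]

/-- The class of morphisms generated by a class `P` under identities, composition and
the monoidal product. -/
inductive GenBy (P : MorphismProperty C) : ∀ {X Y : C}, (X ⟶ Y) → Prop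
  | of {X Y : C} {f : X ⟶ Y} : P f → GenBy P f
  | id (X : C) : GenBy P (𝟙 X)
  | comp {X Y Z : C} {f : X ⟶ Y} {g : Y ⟶ Z} : GenBy P f → GenBy P g → GenBy P (f ≫ g)
  | tensor {X X' Y Y' : C} {f : X ⟶ Y} {g : X' ⟶ Y'} :
      GenBy P f → GenBy P g → GenBy P (f ⊗ₘ g)

/-- Let `C` be a monoidal category generated by wide monoidal subcategories
`spure(C) = S` and `I(C) = I`, and suppose `C` is `(spure, I)`-crossed: every
composable pair `Σ ∘ Γ` with `Γ ∈ S` and `Σ ∈ I` can be rewritten as `Γ' ∘ Σ'` with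
`Σ' ∈ I` and `Γ' ∈ S`. Then every morphism of `C` can be written in the form
`Γ ∘ Σ` with `Γ ∈ spure(C)` and `Σ ∈ I(C)`. -/
theorem crossed_factorization (I S : MorphismProperty C)
    (hIid : ∀ X : C, I (𝟙 X)) (hSid : ∀ X : C, S (𝟙 X))
    (hIcomp : ∀ {X Y Z : C} (f : X ⟶ Y) (g : Y ⟶ Z), I f → I g → I (f ≫ g))
    (hScomp : ∀ {X Y Z : C} (f : X ⟶ Y) (g : Y ⟶ Z), S f → S g → S (f ≫ g))
    (hItensor : ∀ {X X' Y Y' : C} (f : X ⟶ Y) (g : X' ⟶ Y'), I f → I g → I (f ⊗ₘ g))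
    (hStensor : ∀ {X X' Y Y' : C} (f : X ⟶ Y) (g : X' ⟶ Y'), S f → S g → S (f ⊗ₘ g))
    (hgen : ∀ {X Y : C} (f : X ⟶ Y), GenBy (I ⊔ S) f)
    (hcrossed : ∀ {X Y Z : C} (γ : X ⟶ Y) (σ : Y ⟶ Z), S γ → I σ →
      ∃ (W : C) (σ' : X ⟶ W) (γ' : W ⟶ Z), I σ' ∧ S γ' ∧ γ ≫ σ = σ' ≫ γ') :
    ∀ {X Y : C} (f : X ⟶ Y),
      ∃ (Z : C) (σ : X ⟶ Z) (γ : Z ⟶ Y), I σ ∧ S γ ∧ f = σ ≫ γ := by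
  intro X Y f
  induction hgen f with
  | @of X Y f hf =>
    rcases hf with hI | hS
    · exact ⟨Y, f, 𝟙 Y, hI, hSid Y, by simp⟩
    · exact ⟨X, 𝟙 X, f, hIid X, hS, by simp⟩
  | id X => exact ⟨X, 𝟙 X, 𝟙 X, hIid X, hSid X, by simp⟩
  | comp _ _ ihf ihg =>
    obtain ⟨Z₁, σ₁, γ₁, hσ₁, hγ₁, e₁⟩ := ihf
    obtain ⟨Z₂, σ₂, γ₂, hσ₂, hγ₂, e₂⟩ := ihg
    obtain ⟨W, σ', γ', hσ', hγ', e⟩ := hcrossed γ₁ σ₂ hγ₁ hσ₂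
    exact ⟨W, σ₁ ≫ σ', γ' ≫ γ₂, hIcomp _ _ hσ₁ hσ', hScomp _ _ hγ' hγ₂, by
      rw [e₁, e₂]; simp only [Category.assoc]; rw [← Category.assoc γ₁, e]; simp⟩
  | tensor _ _ ihf ihg =>
    obtain ⟨Z₁, σ₁, γ₁, hσ₁, hγ₁, e₁⟩ := ihf
    obtain ⟨Z₂, σ₂, γ₂, hσ₂, hγ₂, e₂⟩ := ihg
    exact ⟨Z₁ ⊗ Z₂, σ₁ ⊗ₘ σ₂, γ₁ ⊗ₘ γ₂, hItensor _ _ hσ₁ hσ₂, hStensor _ _ hγ₁ hγ₂, by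
      rw [e₁, e₂, ← tensorHom_comp_tensorHom]⟩
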